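/- Let T be a symmetric bilinear form on an n-dimensional Lorentzian vector space. T has the dominant property (T(u,v) ≥ 0 for all future-pointing causal u,v) if and only if in every orthonormal basis (e₀,e₁,…,e_{n-1}) with e₀ future-pointing timelike, one has T(e₀,e₀) ≥ |T(e_α,e_β)| for all indices α,β. -/

import Mathlib

open scoped BigOperators

noncomputable section

/-- Minkowski metric on `Fin n → ℝ`, mostly-plus signature (1, n-1). -/
def mink (n : ℕ) [NeZero n] (u v : Fin n → ℝ) : ℝ :=
  ∑ i : Fin n, (if i = 0 then (-1 : ℝ) else 1) * u i * v i

/-- Future-pointing causal vector: nonpositive norm, in the closed future half-cone. -/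
def FutureCausal (n : ℕ) [NeZero n] (u : Fin n → ℝ) : Prop :=
  mink n u u ≤ 0 ∧ 0 ≤ u 0

/-- Future-pointing timelike vector. -/
def FutureTimelike (n : ℕ) [NeZero n] (u : Fin n → ℝ) : Prop :=
  mink n u u < 0 ∧ 0 < u 0

/-- A family `e : Fin n → (Fin n → ℝ)` is an orthonormal basis for the Minkowski
metric: `g(e_α, e_β) = diag(-1, 1, …, 1)`. -/
def IsLorentzOrthonormal (n : ℕ) [NeZero n] (e : Fin n → (Fin n → ℝ)) : Prop :=
  ∀ α β : Fin n, mink n (e α) (e β) =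
    if α = β then (if α = 0 then (-1 : ℝ) else 1) else 0

section Aux

variable {n : ℕ} [NeZero n]

lemma mink_comm (u v : Fin n → ℝ) : mink n u v = mink n v u :=
  Finset.sum_congr rfl fun i _ => by ring

lemma mink_add_left (u u' v : Fin n → ℝ) : mink n (u + u') v = mink n u v + mink n u' v := by
  simp only [mink, Pi.add_apply, ← Finset.sum_add_distrib]
  exact Finset.sum_congr rfl fun i _ => by ring

lemma mink_add_right (u v v' : Fin n → ℝ) : mink n u (v + v') = mink n u v + mink n u v' := by
  rw [mink_comm, mink_add_left, mink_comm v u, mink_comm v' u]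

lemma mink_smul_left (c : ℝ) (u v : Fin n → ℝ) : mink n (c • u) v = c * mink n u v := by
  simp only [mink, Pi.smul_apply, smul_eq_mul, Finset.mul_sum]
  exact Finset.sum_congr rfl fun i _ => by ring

lemma mink_smul_right (c : ℝ) (u v : Fin n → ℝ) : mink n u (c • v) = c * mink n u v := by
  rw [mink_comm, mink_smul_left, mink_comm]

lemma mink_sub_left (u u' v : Fin n → ℝ) : mink n (u - u') v = mink n u v - mink n u' v := by
  simp only [mink, Pi.sub_apply, ← Finset.sum_sub_distrib]
  exact Finset.sum_congr rfl fun i _ => by ring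

lemma mink_sub_right (u v v' : Fin n → ℝ) : mink n u (v - v') = mink n u v - mink n u v' := by
  rw [mink_comm, mink_sub_left, mink_comm v u, mink_comm v' u]

lemma mink_sum_left {ι : Type*} (s : Finset ι) (f : ι → Fin n → ℝ) (v : Fin n → ℝ) :
    mink n (∑ j ∈ s, f j) v = ∑ j ∈ s, mink n (f j) v := by
  classical
  induction s using Finset.induction with
  | empty => simp [mink]
  | @insert a s h ih => rw [Finset.sum_insert h, mink_add_left, ih, Finset.sum_insert h]

lemma mink_sum_right {ι : Type*} (s : Finset ι) (u : Fin n → ℝ) (f : ι → Fin n → ℝ) :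
    mink n u (∑ j ∈ s, f j) = ∑ j ∈ s, mink n u (f j) := by
  rw [mink_comm, mink_sum_left]; exact Finset.sum_congr rfl fun j _ => mink_comm _ _

/-- standard basis -/
def stdB (n : ℕ) [NeZero n] (α : Fin n) : Fin n → ℝ := fun i => if i = α then 1 else 0

lemma mink_std_left (α : Fin n) (v : Fin n → ℝ) :
    mink n (stdB n α) v = (if α = 0 then (-1:ℝ) else 1) * v α := by
  rw [mink]
  rw [Finset.sum_eq_single α]
  · simp [stdB]
  · intro b _ hb; simp [stdB, hb]
  · intro h; exact absurd (Finset.mem_univ α) h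

lemma mink_std_right (α : Fin n) (v : Fin n → ℝ) :
    mink n v (stdB n α) = (if α = 0 then (-1:ℝ) else 1) * v α := by
  rw [mink_comm, mink_std_left]

lemma sum_stdB (z : Fin n → ℝ) : (∑ α : Fin n, z α • stdB n α) = z := by
  funext i
  simp [stdB, Finset.sum_apply, Pi.smul_apply]

lemma mink_split (u v : Fin n → ℝ) :
    mink n u v = -(u 0 * v 0) + ∑ i ∈ Finset.univ.erase 0, u i * v i := by
  rw [mink, ← Finset.add_sum_erase _ _ (Finset.mem_univ (0 : Fin n))]
  congr 1
  · simp
  · exact Finset.sum_congr rfl fun i hi => by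
      rw [if_neg (Finset.ne_of_mem_erase hi)]; ring

/-- Minkowski reflection through a non-null vector `h`. -/
def reflMap (n : ℕ) [NeZero n] (h : Fin n → ℝ) : (Fin n → ℝ) →ₗ[ℝ] (Fin n → ℝ) where
  toFun u := u - (2 * mink n u h / mink n h h) • h
  map_add' u v := by
    simp only [mink_add_left]
    rw [show 2 * (mink n u h + mink n v h) / mink n h h
        = 2 * mink n u h / mink n h h + 2 * mink n v h / mink n h h by ring, add_smul]
    abel
  map_smul' c u := by
    simp only [mink_smul_left, RingHom.id_apply, smul_sub, smul_smul]
    rw [show 2 * (c * mink n u h) / mink n h h = c * (2 * mink n u h / mink n h h) by ring]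

lemma reflMap_apply (h u : Fin n → ℝ) :
    reflMap n h u = u - (2 * mink n u h / mink n h h) • h := rfl

lemma mink_reflMap (h : Fin n → ℝ) (hh : mink n h h ≠ 0) (u v : Fin n → ℝ) :
    mink n (reflMap n h u) (reflMap n h v) = mink n u v := by
  simp only [reflMap_apply, mink_sub_left, mink_sub_right, mink_smul_left, mink_smul_right,
    mink_comm h v]
  field_simp
  ring

lemma reflMap_reflMap (h : Fin n → ℝ) (hh : mink n h h ≠ 0) (u : Fin n → ℝ) :
    reflMap n h (reflMap n h u) = u := by
  simp only [reflMap_apply, mink_sub_left, mink_smul_left]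
  rw [show 2 * (mink n u h - 2 * mink n u h / mink n h h * mink n h h) / mink n h h
      = -(2 * mink n u h / mink n h h) by field_simp; ring]
  module

lemma reflMap_fix (h u : Fin n → ℝ) (hu : mink n u h = 0) : reflMap n h u = u := by
  simp [reflMap_apply, hu]

lemma abs_sum_le_sqrt {ι : Type*} (s : Finset ι) (f g : ι → ℝ) :
    |∑ i ∈ s, f i * g i| ≤ Real.sqrt (∑ i ∈ s, f i ^ 2) * Real.sqrt (∑ i ∈ s, g i ^ 2) := by
  have h := Finset.sum_mul_sq_le_sq_mul_sq s f g
  calc |∑ i ∈ s, f i * g i| = Real.sqrt ((∑ i ∈ s, f i * g i) ^ 2) :=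
        (Real.sqrt_sq_eq_abs _).symm
    _ ≤ Real.sqrt ((∑ i ∈ s, f i ^ 2) * ∑ i ∈ s, g i ^ 2) := Real.sqrt_le_sqrt h
    _ = _ := Real.sqrt_mul (by positivity) _

lemma sqrt_spatial_le {w : Fin n → ℝ} (hw : mink n w w ≤ 0) (hw0 : 0 ≤ w 0) :
    Real.sqrt (∑ i ∈ Finset.univ.erase 0, w i ^ 2) ≤ w 0 := by
  have h := mink_split w w
  have h2 : ∑ i ∈ Finset.univ.erase 0, w i ^ 2 ≤ w 0 ^ 2 := by
    have : ∑ i ∈ Finset.univ.erase 0, w i * w i ≤ w 0 * w 0 := by nlinarith [hw, h]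
    calc ∑ i ∈ Finset.univ.erase 0, w i ^ 2 = ∑ i ∈ Finset.univ.erase 0, w i * w i := by
          exact Finset.sum_congr rfl fun i _ => sq (w i) ▸ by ring
      _ ≤ w 0 * w 0 := this
      _ = w 0 ^ 2 := by ring
  calc Real.sqrt (∑ i ∈ Finset.univ.erase 0, w i ^ 2) ≤ Real.sqrt (w 0 ^ 2) :=
        Real.sqrt_le_sqrt h2
    _ = w 0 := by rw [Real.sqrt_sq hw0]

lemma mink_nonpos {w v : Fin n → ℝ} (hww : mink n w w ≤ 0) (hw0 : 0 ≤ w 0)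
    (hvv : mink n v v ≤ 0) (hv0 : 0 ≤ v 0) : mink n w v ≤ 0 := by
  have hsw := sqrt_spatial_le hww hw0
  have hsv := sqrt_spatial_le hvv hv0
  have hcs := abs_sum_le_sqrt (Finset.univ.erase (0 : Fin n)) w v
  have h := mink_split w v
  have h1 : ∑ i ∈ Finset.univ.erase 0, w i * v i ≤ w 0 * v 0 := by
    calc ∑ i ∈ Finset.univ.erase 0, w i * v i ≤ |∑ i ∈ Finset.univ.erase 0, w i * v i| :=
          le_abs_self _
      _ ≤ Real.sqrt (∑ i ∈ Finset.univ.erase 0, w i ^ 2)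
          * Real.sqrt (∑ i ∈ Finset.univ.erase 0, v i ^ 2) := hcs
      _ ≤ w 0 * v 0 := mul_le_mul hsw hsv (Real.sqrt_nonneg _) hw0
  linarith

lemma stdB_lorentz : IsLorentzOrthonormal n (stdB n) := by
  intro α β
  rw [mink_std_left]
  by_cases h : α = β <;> simp [stdB, h]

/-- a Minkowski isometry fixing `w` and sending unit spacelike `y` to unit spacelike `x`,
both orthogonal to `w`. -/
lemma exists_rot (w x y : Fin n → ℝ) (hx : mink n x x = 1) (hy : mink n y y = 1)
    (hwx : mink n w x = 0) (hwy : mink n w y = 0) :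
    ∃ B : (Fin n → ℝ) →ₗ[ℝ] (Fin n → ℝ),
      (∀ u v, mink n (B u) (B v) = mink n u v) ∧ B w = w ∧ B y = x := by
  rcases le_or_gt (mink n x y) 0 with hm | hm
  · refine ⟨reflMap n (y - x), ?_, ?_, ?_⟩
    · have mhh : mink n (y - x) (y - x) = 2 - 2 * mink n x y := by
        rw [mink_sub_left, mink_sub_right, mink_sub_right, hy, hx, mink_comm y x]; ring
      have hne : mink n (y - x) (y - x) ≠ 0 := by rw [mhh]; intro h; nlinarith
      exact fun u v => mink_reflMap _ hne u v
    · exact reflMap_fix _ _ (by rw [mink_sub_right, hwy, hwx]; ring)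
    · rw [reflMap_apply]
      have m1 : mink n y (y - x) = 1 - mink n x y := by
        rw [mink_sub_right, hy, mink_comm y x]
      have m2 : mink n (y - x) (y - x) = 2 - 2 * mink n x y := by
        rw [mink_sub_left, mink_sub_right, mink_sub_right, hy, hx, mink_comm y x]; ring
      rw [m1, m2, show 2 * (1 - mink n x y) / (2 - 2 * mink n x y) = 1 by
        rw [show (2 : ℝ) - 2 * mink n x y = 2 * (1 - mink n x y) by ring]
        rw [div_self (by intro h; nlinarith [mul_self_nonneg (1 - mink n x y)] )]]
      module
  · refine ⟨(reflMap n x).comp (reflMap n (y + x)), ?_, ?_, ?_⟩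
    · have mhh : mink n (y + x) (y + x) = 2 + 2 * mink n x y := by
        rw [mink_add_left, mink_add_right, mink_add_right, hy, hx, mink_comm y x]; ring
      have hne : mink n (y + x) (y + x) ≠ 0 := by rw [mhh]; positivity
      have hxne : mink n x x ≠ 0 := by rw [hx]; norm_num
      exact fun u v => by
        rw [LinearMap.comp_apply, LinearMap.comp_apply, mink_reflMap _ hxne,
          mink_reflMap _ hne]
    · rw [LinearMap.comp_apply,
        reflMap_fix (y + x) w (by rw [mink_add_right, hwy, hwx]; ring),
        reflMap_fix x w hwx]
    · rw [LinearMap.comp_apply]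
      have s1 : reflMap n (y + x) y = -x := by
        rw [reflMap_apply]
        have m1 : mink n y (y + x) = 1 + mink n x y := by
          rw [mink_add_right, hy, mink_comm y x]
        have m2 : mink n (y + x) (y + x) = 2 + 2 * mink n x y := by
          rw [mink_add_left, mink_add_right, mink_add_right, hy, hx, mink_comm y x]; ring
        rw [m1, m2, show 2 * (1 + mink n x y) / (2 + 2 * mink n x y) = 1 by
          rw [show (2 : ℝ) + 2 * mink n x y = 2 * (1 + mink n x y) by ring]
          rw [div_self (by positivity)]]
        module
      rw [s1, reflMap_apply]
      have m3 : mink n (-x) x = -1 := by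
        rw [show -x = (-1 : ℝ) • x by module, mink_smul_left, hx]; ring
      rw [m3, hx]
      norm_num
      module

/-- adapted Lorentz frame with `e 0 = w`, with explicit expansion of any vector,
and the possibility to further rotate any orthogonal unit spacelike `x` into slot `i0`. -/
lemma exists_adapted (w : Fin n → ℝ) (hw : mink n w w = -1) (hw0 : 0 < w 0) :
    ∃ e : Fin n → (Fin n → ℝ), IsLorentzOrthonormal n e ∧ e 0 = w ∧
      (∀ v : Fin n → ℝ,
        v = ∑ α : Fin n, ((if α = 0 then (-1 : ℝ) else 1) * mink n (e α) v) • e α) ∧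
      (∀ x : Fin n → ℝ, mink n x x = 1 → mink n w x = 0 → ∀ i0 : Fin n, i0 ≠ 0 →
        ∃ f : Fin n → (Fin n → ℝ), IsLorentzOrthonormal n f ∧ f 0 = w ∧ f i0 = x) := by
  set E0 : Fin n → ℝ := stdB n 0 with hE0
  have mwE0 : mink n w E0 = -(w 0) := by rw [mink_std_right]; simp
  have mE0w : mink n E0 w = -(w 0) := by rw [mink_std_left]; simp
  have mE0E0 : mink n E0 E0 = -1 := by rw [mink_std_left]; simp [hE0, stdB]
  have mwne : mink n w w ≠ 0 := by rw [hw]; norm_num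
  have mh1 : mink n (w + E0) (w + E0) = -2 - 2 * w 0 := by
    rw [mink_add_left, mink_add_right, mink_add_right, hw, mwE0, mE0w, mE0E0]; ring
  have mh1ne : mink n (w + E0) (w + E0) ≠ 0 := by rw [mh1]; intro h; linarith
  set A : (Fin n → ℝ) →ₗ[ℝ] (Fin n → ℝ) := (reflMap n w).comp (reflMap n (w + E0)) with hA
  have Aiso : ∀ u v, mink n (A u) (A v) = mink n u v := fun u v => by
    rw [hA, LinearMap.comp_apply, LinearMap.comp_apply, mink_reflMap _ mwne,
      mink_reflMap _ mh1ne]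
  have AE0 : A E0 = w := by
    rw [hA, LinearMap.comp_apply]
    have s1 : reflMap n (w + E0) E0 = -w := by
      rw [reflMap_apply]
      have m1 : mink n E0 (w + E0) = -(w 0) - 1 := by
        rw [mink_add_right, mE0w, mE0E0]; ring
      rw [m1, mh1, show 2 * (-(w 0) - 1) / (-2 - 2 * w 0) = 1 by
        rw [show (-2 : ℝ) - 2 * w 0 = 2 * (-(w 0) - 1) by ring]
        rw [div_self (by intro h; nlinarith)]]
      module
    rw [s1, reflMap_apply]
    have m2 : mink n (-w) w = 1 := by
      rw [show -w = (-1 : ℝ) • w by module, mink_smul_left, hw]; ring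
    rw [m2, hw]
    norm_num
    module
  set e : Fin n → (Fin n → ℝ) := fun α => A (stdB n α) with he
  have eON : IsLorentzOrthonormal n e := fun α β => by
    rw [he]; rw [Aiso]; exact stdB_lorentz α β
  have he0 : e 0 = w := by rw [he]; exact AE0
  set Ainv : (Fin n → ℝ) →ₗ[ℝ] (Fin n → ℝ) := (reflMap n (w + E0)).comp (reflMap n w)
    with hAinv
  have AAinv : ∀ u, A (Ainv u) = u := fun u => by
    rw [hA, hAinv]
    simp only [LinearMap.comp_apply]
    rw [reflMap_reflMap _ mh1ne, reflMap_reflMap _ mwne]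
  refine ⟨e, eON, he0, ?_, ?_⟩
  · intro v
    calc v = A (Ainv v) := (AAinv v).symm
      _ = A (∑ α : Fin n, (Ainv v) α • stdB n α) := by rw [sum_stdB]
      _ = ∑ α : Fin n, (Ainv v) α • A (stdB n α) := by
          rw [map_sum]; exact Finset.sum_congr rfl fun α _ => by rw [map_smul]
      _ = ∑ α : Fin n, ((if α = 0 then (-1 : ℝ) else 1) * mink n (e α) v) • e α := by
          refine Finset.sum_congr rfl fun α _ => ?_
          rw [he]
          congr 1
          have : mink n (e α) v = mink n (A (stdB n α)) (A (Ainv v)) := by rw [AAinv]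
          rw [show mink n (e α) v = mink n (A (stdB n α)) (A (Ainv v)) from this, Aiso,
            mink_std_left]
          by_cases hα : α = 0 <;> simp [hα]
  · intro x hx hwx i0 hi0
    have myy : mink n (e i0) (e i0) = 1 := by rw [eON i0 i0]; simp [hi0]
    have mwy : mink n w (e i0) = 0 := by
      have := eON 0 i0
      rw [he0] at this
      rw [this, if_neg (fun h => hi0 h.symm)]
    obtain ⟨B, Biso, Bw, By⟩ := exists_rot w x (e i0) hx myy hwx mwy
    refine ⟨fun α => B (e α), fun α β => by rw [Biso]; exact eON α β, ?_, By⟩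
    show B (e 0) = w
    rw [he0]; exact Bw


end Aux

/-- A symmetric bilinear form has the dominant property iff in every orthonormal
basis with future-pointing timelike `e₀` one has `T(e₀,e₀) ≥ |T(e_α,e_β)|`. -/
theorem stmt_4 (n : ℕ) [NeZero n]
    (T : (Fin n → ℝ) →ₗ[ℝ] (Fin n → ℝ) →ₗ[ℝ] ℝ)
    (hsym : ∀ x y, T x y = T y x) :
    (∀ u v : Fin n → ℝ, FutureCausal n u → FutureCausal n v → 0 ≤ T u v) ↔
      (∀ e : Fin n → (Fin n → ℝ), IsLorentzOrthonormal n e →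
        FutureTimelike n (e 0) → ∀ α β : Fin n, |T (e α) (e β)| ≤ T (e 0) (e 0)) := by
  constructor
  · -- forward direction
    intro hdom e heON hft α β
    have fc0 : FutureCausal n (e 0) := ⟨le_of_lt hft.1, le_of_lt hft.2⟩
    have hT00 : 0 ≤ T (e 0) (e 0) := hdom _ _ fc0 fc0
    have h00 : mink n (e 0) (e 0) = -1 := by have := heON 0 0; simpa using this
    have key : ∀ γ : Fin n, γ ≠ 0 → ∀ s : ℝ, s * s = 1 →
        FutureCausal n (e 0 + s • e γ) := by
      intro γ hγ s hs
      have h0g : mink n (e 0) (e γ) = 0 := by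
        have := heON 0 γ; rwa [if_neg (fun h => hγ h.symm)] at this
      have hg0 : mink n (e γ) (e 0) = 0 := by rw [mink_comm]; exact h0g
      have hgg : mink n (e γ) (e γ) = 1 := by
        have := heON γ γ; simpa [hγ] using this
      have hnull : mink n (e 0 + s • e γ) (e 0 + s • e γ) = 0 := by
        rw [mink_add_left, mink_add_right, mink_add_right, mink_smul_left, mink_smul_right,
          mink_smul_left, mink_smul_right, h00, h0g, hg0, hgg]
        nlinarith [hs]
      refine ⟨le_of_eq hnull, ?_⟩
      by_contra hneg
      push_neg at hneg
      have hm : mink n (e 0) ((-1 : ℝ) • (e 0 + s • e γ)) ≤ 0 := by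
        apply mink_nonpos (le_of_lt hft.1) (le_of_lt hft.2)
        · rw [mink_smul_left, mink_smul_right, hnull]; norm_num
        · have h1 : ((-1 : ℝ) • (e 0 + s • e γ)) 0 = -((e 0 + s • e γ) 0) := by simp
          rw [h1]; linarith
      rw [mink_smul_right, mink_add_right, mink_smul_right, h00, h0g] at hm
      linarith
    by_cases hα : α = 0 <;> by_cases hβ : β = 0
    · subst hα; subst hβ; rw [abs_of_nonneg hT00]
    · subst hα
      have p1 := hdom (e 0) (e 0 + (1 : ℝ) • e β) fc0 (key β hβ 1 (by norm_num))
      have p2 := hdom (e 0) (e 0 + (-1 : ℝ) • e β) fc0 (key β hβ (-1) (by norm_num))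
      simp only [map_add, map_smul, smul_eq_mul] at p1 p2
      rw [abs_le]; constructor <;> linarith
    · subst hβ
      have p1 := hdom (e 0) (e 0 + (1 : ℝ) • e α) fc0 (key α hα 1 (by norm_num))
      have p2 := hdom (e 0) (e 0 + (-1 : ℝ) • e α) fc0 (key α hα (-1) (by norm_num))
      simp only [map_add, map_smul, smul_eq_mul] at p1 p2
      rw [hsym (e α) (e 0), abs_le]; constructor <;> linarith
    · have q : ∀ s t : ℝ, s * s = 1 → t * t = 1 →
          0 ≤ T (e 0) (e 0) + t * T (e 0) (e β) + s * T (e α) (e 0)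
            + s * (t * T (e α) (e β)) := by
        intro s t hs ht
        have := hdom (e 0 + s • e α) (e 0 + t • e β) (key α hα s hs) (key β hβ t ht)
        simp only [map_add, map_smul, LinearMap.add_apply, LinearMap.smul_apply,
          smul_eq_mul] at this
        linarith
      have q1 := q 1 1 (by norm_num) (by norm_num)
      have q2 := q (-1) (-1) (by norm_num) (by norm_num)
      have q3 := q 1 (-1) (by norm_num) (by norm_num)
      have q4 := q (-1) 1 (by norm_num) (by norm_num)
      rw [abs_le]; constructor <;> nlinarith
  · -- backward direction
    intro H u v hu hv
    have main : ∀ w : Fin n → ℝ, mink n w w = -1 → 0 < w 0 → 0 ≤ T w v := by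
      intro w hw hw0
      obtain ⟨e, eON, he0, hrepr, hrot⟩ := exists_adapted w hw hw0
      have hft : FutureTimelike n (e 0) := by
        rw [he0]; exact ⟨by rw [hw]; norm_num, hw0⟩
      have hH := H e eON hft
      have hT00 : 0 ≤ T (e 0) (e 0) := (abs_nonneg _).trans (hH 0 0)
      set z : Fin n → ℝ := fun α => (if α = 0 then (-1 : ℝ) else 1) * mink n (e α) v
        with hzdef
      have hv_repr : v = ∑ α : Fin n, z α • e α := hrepr v
      have hz0 : z 0 = -(mink n w v) := by simp [hzdef, he0]
      have hwv : mink n w v ≤ 0 :=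
        mink_nonpos (by rw [hw]; norm_num) (le_of_lt hw0) hv.1 hv.2
      have hz0nn : 0 ≤ z 0 := by rw [hz0]; linarith
      -- Parseval
      have h2 : mink n (∑ α : Fin n, z α • e α) (∑ β : Fin n, z β • e β)
          = -(z 0 * z 0) + ∑ i ∈ Finset.univ.erase 0, z i * z i := by
        rw [mink_sum_left]
        have hterm : ∀ α : Fin n, mink n (z α • e α) (∑ β : Fin n, z β • e β)
            = (if α = 0 then (-1 : ℝ) else 1) * (z α * z α) := by
          intro α
          rw [mink_smul_left, mink_sum_right]
          rw [Finset.sum_congr rfl fun β _ => by rw [mink_smul_right, eON α β]]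
          rw [Finset.sum_eq_single α
            (fun β _ hβ => by rw [if_neg (fun h => hβ h.symm)]; ring)
            (fun h => absurd (Finset.mem_univ α) h)]
          rw [if_pos rfl]; ring
        rw [Finset.sum_congr rfl fun α _ => hterm α,
          ← Finset.add_sum_erase _ _ (Finset.mem_univ (0 : Fin n))]
        congr 1
        · simp
        · exact Finset.sum_congr rfl fun i hi => by
            rw [if_neg (Finset.ne_of_mem_erase hi)]; ring
      have hmz : mink n z z ≤ 0 := by
        rw [mink_split]
        rw [← hv_repr] at h2
        have := hv.1
        linarith [h2 ▸ this]
      have hσ : Real.sqrt (∑ i ∈ Finset.univ.erase 0, z i ^ 2) ≤ z 0 :=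
        sqrt_spatial_le hmz hz0nn
      -- the row vector r
      set r : Fin n → ℝ := fun i => T w (e i) with hrdef
      have hρ : Real.sqrt (∑ i ∈ Finset.univ.erase 0, r i ^ 2) ≤ T (e 0) (e 0) := by
        by_cases hr0 : (∑ i ∈ Finset.univ.erase 0, r i ^ 2) = 0
        · rw [hr0, Real.sqrt_zero]; exact hT00
        · obtain ⟨i0, hi0mem, hi0ne⟩ := Finset.exists_ne_zero_of_sum_ne_zero hr0
          have hi0 : i0 ≠ 0 := Finset.ne_of_mem_erase hi0mem
          set ρ := Real.sqrt (∑ i ∈ Finset.univ.erase 0, r i ^ 2) with hρdef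
          have hsumnn : 0 ≤ ∑ i ∈ Finset.univ.erase 0, r i ^ 2 :=
            Finset.sum_nonneg fun i _ => sq_nonneg _
          have hρpos : 0 < ρ :=
            Real.sqrt_pos.mpr (lt_of_le_of_ne hsumnn (Ne.symm hr0))
          have hρsq : (∑ i ∈ Finset.univ.erase 0, r i ^ 2) = ρ ^ 2 :=
            (Real.sq_sqrt hsumnn).symm
          set X : Fin n → ℝ := ∑ i ∈ Finset.univ.erase 0, r i • e i with hXdef
          have hXX : mink n X X = ρ ^ 2 := by
            rw [hXdef, mink_sum_left]
            have hterm : ∀ i ∈ Finset.univ.erase 0,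
                mink n (r i • e i) (∑ j ∈ Finset.univ.erase 0, r j • e j)
                  = r i ^ 2 := by
              intro i hi
              rw [mink_smul_left, mink_sum_right]
              rw [Finset.sum_congr rfl fun j _ => by rw [mink_smul_right, eON i j]]
              rw [Finset.sum_eq_single_of_mem i hi
                (fun j _ hj => by rw [if_neg (fun h => hj h.symm)]; ring)]
              rw [if_pos rfl, if_neg (Finset.ne_of_mem_erase hi)]; ring
            rw [Finset.sum_congr rfl hterm, hρsq]
          have hwX : mink n X w = 0 := by
            rw [hXdef, mink_sum_left]
            refine Finset.sum_eq_zero fun i hi => ?_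
            rw [mink_smul_left]
            have := eON i 0
            rw [he0, if_neg (Finset.ne_of_mem_erase hi)] at this
            rw [this]; ring
          set x : Fin n → ℝ := ρ⁻¹ • X with hxdef
          have hxx : mink n x x = 1 := by
            rw [hxdef, mink_smul_left, mink_smul_right, hXX]
            field_simp
          have hwx : mink n w x = 0 := by
            rw [hxdef, mink_smul_right, mink_comm, hwX]; ring
          obtain ⟨f, fON, hf0, hfi0⟩ := hrot x hxx hwx i0 hi0
          have hftf : FutureTimelike n (f 0) := by
            rw [hf0]; exact ⟨by rw [hw]; norm_num, hw0⟩
          have hb := H f fON hftf 0 i0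
          rw [hf0, hfi0] at hb
          have hTx : T w x = ρ := by
            rw [hxdef, map_smul, smul_eq_mul, hXdef, map_sum]
            rw [Finset.sum_congr rfl fun i (_ : i ∈ Finset.univ.erase 0) => by
              rw [map_smul, smul_eq_mul]]
            have : (∑ i ∈ Finset.univ.erase 0, r i * T w (e i))
                = ∑ i ∈ Finset.univ.erase 0, r i ^ 2 :=
              Finset.sum_congr rfl fun i _ => by rw [hrdef]; ring
            rw [this, hρsq]
            field_simp
          rw [hTx] at hb
          calc ρ ≤ |ρ| := le_abs_self ρ
            _ ≤ T w w := hb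
            _ = T (e 0) (e 0) := by rw [he0]
      -- decomposition of T w v
      have hdecomp : T w v = z 0 * T (e 0) (e 0)
          + ∑ i ∈ Finset.univ.erase 0, z i * r i := by
        conv_lhs => rw [hv_repr]
        rw [map_sum]
        rw [Finset.sum_congr rfl fun α (_ : α ∈ Finset.univ) => by
          rw [map_smul, smul_eq_mul]]
        rw [← Finset.add_sum_erase _ _ (Finset.mem_univ (0 : Fin n))]
        congr 1
        rw [he0]
      have hcs := abs_sum_le_sqrt (Finset.univ.erase (0 : Fin n)) z r
      have hmul : Real.sqrt (∑ i ∈ Finset.univ.erase 0, z i ^ 2)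
          * Real.sqrt (∑ i ∈ Finset.univ.erase 0, r i ^ 2)
            ≤ z 0 * T (e 0) (e 0) :=
        mul_le_mul hσ hρ (Real.sqrt_nonneg _) hz0nn
      have habs : -(z 0 * T (e 0) (e 0)) ≤ ∑ i ∈ Finset.univ.erase 0, z i * r i := by
        have := neg_abs_le (∑ i ∈ Finset.univ.erase 0, z i * r i)
        linarith
      linarith [hdecomp]
    -- general future causal u via perturbation
    have step : ∀ ε : ℝ, 0 < ε → 0 ≤ T u v + ε * T (stdB n 0) v := by
      intro ε hε
      set u' : Fin n → ℝ := u + ε • stdB n 0 with hu'def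
      have hu'0 : 0 < u' 0 := by
        have : u' 0 = u 0 + ε := by simp [hu'def, stdB]
        rw [this]; linarith [hu.2]
      have muE0 : mink n u (stdB n 0) = -(u 0) := by rw [mink_std_right]; simp
      have mE0u : mink n (stdB n 0) u = -(u 0) := by rw [mink_std_left]; simp
      have mE0E0 : mink n (stdB n 0) (stdB n 0) = -1 := by
        rw [mink_std_left]; simp [stdB]
      have hu'm : mink n u' u' < 0 := by
        rw [hu'def, mink_add_left, mink_add_right, mink_add_right, mink_smul_left,
          mink_smul_right, mink_smul_left, mink_smul_right, muE0, mE0u, mE0E0]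
        nlinarith [hu.1, hu.2, hε]
      set s := Real.sqrt (-(mink n u' u')) with hsdef
      have hspos : 0 < s := Real.sqrt_pos.mpr (by linarith)
      have hs2 : s * s = -(mink n u' u') := Real.mul_self_sqrt (by linarith)
      set w : Fin n → ℝ := s⁻¹ • u' with hwdef
      have hww : mink n w w = -1 := by
        rw [hwdef, mink_smul_left, mink_smul_right,
          show mink n u' u' = -(s * s) by rw [hs2]; ring]
        field_simp
      have hw0 : 0 < w 0 := by
        have : w 0 = s⁻¹ * u' 0 := by simp [hwdef]
        rw [this]; positivity
      have hTw := main w hww hw0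
      have hu'w : u' = s • w := by
        rw [hwdef, smul_smul, mul_inv_cancel₀ (ne_of_gt hspos), one_smul]
      have hexp : T u' v = s * T w v := by
        rw [hu'w, map_smul, LinearMap.smul_apply, smul_eq_mul]
      have hTu' : 0 ≤ T u' v := by rw [hexp]; positivity
      rw [hu'def, map_add, LinearMap.add_apply, map_smul, LinearMap.smul_apply,
        smul_eq_mul] at hTu'
      linarith
    by_contra hneg
    push_neg at hneg
    set c := T (stdB n 0) v with hcdef
    have hc1 : (0 : ℝ) < |c| + 1 := by positivity
    have hεpos : 0 < -(T u v) / (|c| + 1) := div_pos (by linarith) hc1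
    have h1 := step _ hεpos
    have h2 : -(T u v) / (|c| + 1) * c ≤ -(T u v) / (|c| + 1) * |c| :=
      mul_le_mul_of_nonneg_left (le_abs_self c) (le_of_lt hεpos)
    have h3 : -(T u v) / (|c| + 1) * |c| < -(T u v) := by
      rw [div_mul_eq_mul_div, div_lt_iff₀ hc1]
      nlinarith [abs_nonneg c]
    linarith
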